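/- Every graph G admits a nice treedepth decomposition of height exactly td(G); that is, a treedepth decomposition T with V(T) = V(G) such that for every node x of T, the subgraph of G induced by the vertex set of the subtree of T rooted at x is connected. -/

import Mathlib

/-- A rooted forest on vertex type `V`, given by a parent function together with
a depth function certifying acyclicity (roots have depth 1). -/
structure RootedForest (V : Type) where
  parent : V → Option V
  depth : V → ℕ
  depth_root : ∀ v, parent v = none → depth v = 1
  depth_child : ∀ v u, parent v = some u → depth v = depth u + 1

namespace RootedForest

variable {V : Type}

/-- `F.Ancestor u v` : `u` is a strict ancestor of `v` in the forest `F`. -/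
def Ancestor (F : RootedForest V) (u v : V) : Prop :=
  Relation.TransGen (fun a b : V => F.parent a = some b) v u

/-- Height of the forest: the maximum number of nodes on a root-to-leaf path,
equivalently the maximum depth of a node. -/
noncomputable def height (F : RootedForest V) : ℕ :=
  sSup (Set.range F.depth)

/-- The node set of the subtree of `F` rooted at `x` (including `x` itself). -/
def subtreeSet (F : RootedForest V) (x : V) : Set V :=
  {v | v = x ∨ F.Ancestor x v}

/-- `F` is a treedepth decomposition of `G`: every edge of `G` joins an
ancestor-descendant pair of `F`. -/
def IsTreedepthDecomp (F : RootedForest V) (G : SimpleGraph V) : Prop :=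
  ∀ ⦃u v⦄, G.Adj u v → F.Ancestor u v ∨ F.Ancestor v u

end RootedForest

/-- The treedepth of `G`: the minimum height of a treedepth decomposition of `G`. -/
noncomputable def SimpleGraph.treedepth {V : Type} (G : SimpleGraph V) : ℕ :=
  sInf {h | ∃ F : RootedForest V, F.IsTreedepthDecomp G ∧ F.height = h}

open scoped Classical

variable {V : Type}

lemma td_anc_depth_lt (F : RootedForest V) {a v : V} (h : F.Ancestor a v) :
    F.depth a < F.depth v := by
  induction h with
  | single h => have := F.depth_child _ _ h; omega
  | tail h₁ h₂ ih => have := F.depth_child _ _ h₂; omega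

lemma td_one_le_depth (F : RootedForest V) (v : V) : 1 ≤ F.depth v := by
  cases h : F.parent v with
  | none => rw [F.depth_root v h]
  | some u => rw [F.depth_child v u h]; omega

lemma td_anc_comparable (F : RootedForest V) {a b v : V}
    (ha : F.Ancestor a v) (hb : F.Ancestor b v) :
    a = b ∨ F.Ancestor a b ∨ F.Ancestor b a := by
  have hU : Relator.RightUnique (fun a b : V => F.parent a = some b) :=
    fun x y z h1 h2 => Option.some.inj (h1.symm.trans h2)
  rcases Relation.ReflTransGen.total_of_right_unique hU ha.to_reflTransGen hb.to_reflTransGen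
    with h | h
  · rcases Relation.reflTransGen_iff_eq_or_transGen.mp h with h | h
    · exact Or.inl h.symm
    · exact Or.inr (Or.inr h)
  · rcases Relation.reflTransGen_iff_eq_or_transGen.mp h with h | h
    · exact Or.inl h
    · exact Or.inr (Or.inl h)

lemma card_anc_le [Fintype V] (F : RootedForest V) (v : V) :
    (Finset.univ.filter (fun a => F.Ancestor a v)).card ≤ F.depth v - 1 := by
  have key : (Finset.univ.filter (fun a => F.Ancestor a v)).card
      ≤ (Finset.Icc 1 (F.depth v - 1)).card := by
    apply Finset.card_le_card_of_injOn F.depth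
    · intro a ha
      rw [Finset.mem_coe, Finset.mem_filter] at ha
      have h1 := td_one_le_depth F a
      have h2 := td_anc_depth_lt F ha.2
      rw [Finset.mem_coe, Finset.mem_Icc]; omega
    · intro a ha b hb hab
      rw [Finset.mem_coe, Finset.mem_filter] at ha hb
      rcases td_anc_comparable F ha.2 hb.2 with h | h | h
      · exact h
      · have := td_anc_depth_lt F h; omega
      · have := td_anc_depth_lt F h; omega
  rwa [Nat.card_Icc, Nat.add_sub_cancel] at key

lemma nice_aux [Fintype V] [DecidableEq V] (G : SimpleGraph V) :
    ∀ (n : ℕ) (s : Finset V), s.card ≤ n → ∀ F : RootedForest V,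
    (∀ u v, u ∈ s → v ∈ s → G.Adj u v → F.Ancestor u v ∨ F.Ancestor v u) →
    ∃ T : RootedForest V,
      (∀ v u, T.parent v = some u → v ∈ s ∧ u ∈ s) ∧
      (∀ u v, u ∈ s → v ∈ s → G.Adj u v → T.Ancestor u v ∨ T.Ancestor v u) ∧
      (∀ x ∈ s, (G.induce (T.subtreeSet x)).Connected) ∧
      (∀ v ∈ s, T.depth v ≤ (s.filter (fun a => F.Ancestor a v)).card + 1) := by
  intro n
  induction n with
  | zero =>
    intro s hs F hF
    have hse : s = ∅ := Finset.card_eq_zero.mp (Nat.le_antisymm hs (Nat.zero_le _))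
    subst hse
    refine ⟨⟨fun _ => none, fun _ => 1, fun _ _ => rfl, fun v u h => by simp at h⟩,
      ?_, ?_, ?_, ?_⟩
    · intro v u h; simp at h
    · intro u v hu; simp at hu
    · intro x hx; simp at hx
    · intro v hv; simp at hv
  | succ n ih =>
    intro s hs F hF
    by_cases hcard : s.card ≤ n
    · exact ih s hcard F hF
    have hsne : s.Nonempty := Finset.card_pos.mp (by omega)
    obtain ⟨x, hx⟩ := hsne
    set Rel : V → V → Prop := fun a b => a ∈ s ∧ b ∈ s ∧ G.Adj a b with hReldef
    have hRelSymm : Symmetric Rel := fun a b h => ⟨h.2.1, h.1, h.2.2.symm⟩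
    set C : Finset V := s.filter (fun v => Relation.ReflTransGen Rel x v) with hCdef
    have hxC : x ∈ C := Finset.mem_filter.mpr ⟨hx, Relation.ReflTransGen.refl⟩
    have hCs : C ⊆ s := Finset.filter_subset _ _
    have hclose : ∀ a b, a ∈ C → b ∈ s → G.Adj a b → b ∈ C := by
      intro a b haC hb hab
      obtain ⟨has, hra⟩ := Finset.mem_filter.mp haC
      exact Finset.mem_filter.mpr ⟨hb, hra.tail ⟨has, hb, hab⟩⟩
    obtain ⟨r, hrC, hrmin⟩ := Finset.exists_min_image C F.depth ⟨x, hxC⟩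
    have hrs : r ∈ s := hCs hrC
    -- every vertex of C other than r is a strict F-descendant of r
    have hranc : ∀ v ∈ C, v = r ∨ F.Ancestor r v := by
      intro v hv
      have hrv : Relation.ReflTransGen Rel r v :=
        ((@Relation.ReflTransGen.stdSymm _ Rel ⟨fun a b h => hRelSymm h⟩).symm _ _ ((Finset.mem_filter.mp hrC).2)).trans
          ((Finset.mem_filter.mp hv).2)
      clear hv
      induction hrv with
      | refl => exact Or.inl rfl
      | @tail b c hrb hbc ihb =>
        obtain ⟨hbs, hcs, hadj⟩ := hbc
        have hbC : b ∈ C := Finset.mem_filter.mpr ⟨hbs, ((Finset.mem_filter.mp hrC).2).trans hrb⟩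
        have hcC : c ∈ C := hclose b c hbC hcs hadj
        have hnot : ¬ F.Ancestor c r := fun h =>
          absurd (td_anc_depth_lt F h) (not_lt.mpr (hrmin c hcC))
        rcases ihb with rfl | hrb'
        · rcases hF b c hbs hcs hadj with h | h
          · exact Or.inr h
          · exact absurd h hnot
        · rcases hF b c hbs hcs hadj with h | h
          · exact Or.inr (Relation.TransGen.trans h hrb')
          · rcases td_anc_comparable F hrb' h with heq | h' | h'
            · exact Or.inl heq.symm
            · exact Or.inr h'
            · exact absurd h' hnot
    set s₁ : Finset V := s \ C with hs₁def
    set s₂ : Finset V := C.erase r with hs₂def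
    have hs₂C : s₂ ⊆ C := Finset.erase_subset _ _
    have hrns₂ : r ∉ s₂ := Finset.notMem_erase _ _
    have hrns₁ : r ∉ s₁ := fun h => (Finset.mem_sdiff.mp h).2 hrC
    have hdisj : ∀ a, a ∈ s₁ → a ∉ s₂ := fun a h h2 => (Finset.mem_sdiff.mp h).2 (hs₂C h2)
    have hs₁s : s₁ ⊆ s := Finset.sdiff_subset
    have hs₂s : s₂ ⊆ s := fun a ha => hCs (hs₂C ha)
    have hs₂anc : ∀ v ∈ s₂, F.Ancestor r v := fun v hv =>
      (hranc v (hs₂C hv)).resolve_left (Finset.mem_erase.mp hv).1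
    have hcard₁ : s₁.card ≤ n := by
      have h1 : s₁.card = s.card - C.card := by rw [hs₁def]; exact Finset.card_sdiff_of_subset hCs
      have h2 : 1 ≤ C.card := Finset.card_pos.mpr ⟨x, hxC⟩
      have h3 : C.card ≤ s.card := Finset.card_le_card hCs
      omega
    have hcard₂ : s₂.card ≤ n := by
      have h1 : s₂.card = C.card - 1 := by rw [hs₂def]; exact Finset.card_erase_of_mem hrC
      have h3 : C.card ≤ s.card := Finset.card_le_card hCs
      omega
    obtain ⟨T₁, h1₁, h2₁, h3₁, h4₁⟩ :=
      ih s₁ hcard₁ F (fun u v hu hv hadj => hF u v (hs₁s hu) (hs₁s hv) hadj)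
    obtain ⟨T₂, h1₂, h2₂, h3₂, h4₂⟩ :=
      ih s₂ hcard₂ F (fun u v hu hv hadj => hF u v (hs₂s hu) (hs₂s hv) hadj)
    set Tpar : V → Option V := fun v =>
      if v ∈ s₂ then some ((T₂.parent v).getD r) else if v = r then none else T₁.parent v
      with hTpardef
    set Tdep : V → ℕ := fun v =>
      if v ∈ s₂ then T₂.depth v + 1 else if v = r then 1 else T₁.depth v with hTdepdef
    have hTpar₂ : ∀ v ∈ s₂, Tpar v = some ((T₂.parent v).getD r) := by
      intro v hv; simp only [hTpardef]; rw [if_pos hv]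
    have hTparr : Tpar r = none := by
      simp [hTpardef, hrns₂]
    have hTpar₁ : ∀ v, v ∉ s₂ → v ≠ r → Tpar v = T₁.parent v := by
      intro v h h'; simp only [hTpardef]; rw [if_neg h, if_neg h']
    have hTdep₂ : ∀ v ∈ s₂, Tdep v = T₂.depth v + 1 := by
      intro v hv; simp only [hTdepdef]; rw [if_pos hv]
    have hTdepr : Tdep r = 1 := by
      simp [hTdepdef, hrns₂]
    have hTdep₁ : ∀ v, v ∉ s₂ → v ≠ r → Tdep v = T₁.depth v := by
      intro v h h'; simp only [hTdepdef]; rw [if_neg h, if_neg h']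
    have hTroot : ∀ v, Tpar v = none → Tdep v = 1 := by
      intro v hv
      by_cases h2 : v ∈ s₂
      · rw [hTpar₂ v h2] at hv; simp at hv
      · by_cases hvr : v = r
        · subst hvr; exact hTdepr
        · rw [hTpar₁ v h2 hvr] at hv
          rw [hTdep₁ v h2 hvr, T₁.depth_root v hv]
    have hTchild : ∀ v u, Tpar v = some u → Tdep v = Tdep u + 1 := by
      intro v u hv
      by_cases h2 : v ∈ s₂
      · rw [hTpar₂ v h2] at hv
        have hu : u = (T₂.parent v).getD r := (Option.some.inj hv).symm
        cases hp : T₂.parent v with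
        | none =>
          rw [hp] at hu; simp at hu
          rw [hTdep₂ v h2, T₂.depth_root v hp, hu, hTdepr]
        | some w =>
          rw [hp] at hu; simp at hu
          have hw : w ∈ s₂ := (h1₂ v w hp).2
          rw [hTdep₂ v h2, hu, hTdep₂ w hw, T₂.depth_child v w hp]
      · by_cases hvr : v = r
        · subst hvr; rw [hTparr] at hv; simp at hv
        · rw [hTpar₁ v h2 hvr] at hv
          obtain ⟨hv1, hu1⟩ := h1₁ v u hv
          have hu2 : u ∉ s₂ := hdisj u hu1
          have hur : u ≠ r := fun e => hrns₁ (e ▸ hu1)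
          rw [hTdep₁ v h2 hvr, hTdep₁ u hu2 hur, T₁.depth_child v u hv]
    set T : RootedForest V := ⟨Tpar, Tdep, hTroot, hTchild⟩ with hTdef
    have hTp : T.parent = Tpar := rfl
    have hTd : T.depth = Tdep := rfl
    -- lifting chains from T₁ and T₂ into T
    have L1 : ∀ {u v : V}, T₁.Ancestor u v → T.Ancestor u v := by
      intro u v h
      refine Relation.TransGen.mono ?_ _ _ h
      intro a b hab
      have ha := (h1₁ a b hab).1
      show T.parent a = some b
      rw [hTp, hTpar₁ a (hdisj a ha) (fun e => hrns₁ (e ▸ ha))]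
      exact hab
    have L2 : ∀ {u v : V}, T₂.Ancestor u v → T.Ancestor u v := by
      intro u v h
      refine Relation.TransGen.mono ?_ _ _ h
      intro a b hab
      have ha := (h1₂ a b hab).1
      show T.parent a = some b
      rw [hTp, hTpar₂ a ha, hab]; rfl
    have L3aux : ∀ (m : ℕ) (v : V), v ∈ s₂ → T₂.depth v ≤ m → T.Ancestor r v := by
      intro m
      induction m with
      | zero => intro v hv hd; have := td_one_le_depth T₂ v; omega
      | succ m ihm =>
        intro v hv hd
        cases hp : T₂.parent v with
        | none =>
          refine Relation.TransGen.single ?_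
          show T.parent v = some r
          rw [hTp, hTpar₂ v hv, hp]; rfl
        | some u =>
          have hu : u ∈ s₂ := (h1₂ v u hp).2
          have hdu : T₂.depth u ≤ m := by have := T₂.depth_child v u hp; omega
          refine Relation.TransGen.head ?_ (ihm u hu hdu)
          show T.parent v = some u
          rw [hTp, hTpar₂ v hv, hp]; rfl
    have L3 : ∀ v ∈ s₂, T.Ancestor r v := fun v hv => L3aux (T₂.depth v) v hv le_rfl
    -- backward step analysis
    have B1 : ∀ a b, T.parent a = some b → b ∈ s₁ → T₁.parent a = some b := by
      intro a b hab hb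
      by_cases h2 : a ∈ s₂
      · rw [hTp, hTpar₂ a h2] at hab
        have hbv : (T₂.parent a).getD r = b := Option.some.inj hab
        cases hp : T₂.parent a with
        | none => rw [hp] at hbv; simp at hbv; exact absurd hb (hbv ▸ hrns₁)
        | some w =>
          rw [hp] at hbv; simp at hbv
          have : b ∈ s₂ := hbv ▸ (h1₂ a w hp).2
          exact absurd this (hdisj b hb)
      · by_cases har : a = r
        · subst har; rw [hTp, hTparr] at hab; simp at hab
        · rw [hTp, hTpar₁ a h2 har] at hab; exact hab
    have B2 : ∀ a b, T.parent a = some b → b ∈ s₂ → T₂.parent a = some b := by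
      intro a b hab hb
      by_cases h2 : a ∈ s₂
      · rw [hTp, hTpar₂ a h2] at hab
        have hbv : (T₂.parent a).getD r = b := Option.some.inj hab
        cases hp : T₂.parent a with
        | none => rw [hp] at hbv; simp at hbv; exact absurd hb (hbv ▸ hrns₂)
        | some w => rw [hp] at hbv; simp at hbv; rw [← hbv]
      · by_cases har : a = r
        · subst har; rw [hTp, hTparr] at hab; simp at hab
        · rw [hTp, hTpar₁ a h2 har] at hab
          exact absurd hb (hdisj b (h1₁ a b hab).2)
    have B3 : ∀ a, T.parent a = some r → a ∈ s₂ := by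
      intro a ha
      by_cases h2 : a ∈ s₂
      · exact h2
      · by_cases har : a = r
        · subst har; rw [hTp, hTparr] at ha; simp at ha
        · rw [hTp, hTpar₁ a h2 har] at ha
          exact absurd (h1₁ a r ha).2 hrns₁
    have Bchain₁ : ∀ {v u : V}, T.Ancestor u v → u ∈ s₁ → T₁.Ancestor u v := by
      intro v u h
      induction h with
      | single h => exact fun hu => Relation.TransGen.single (B1 _ _ h hu)
      | @tail c d h₁ h₂ ih =>
        intro hu
        have hb := B1 c d h₂ hu
        exact Relation.TransGen.tail (ih (h1₁ c d hb).1) hb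
    have Bchain₂ : ∀ {v u : V}, T.Ancestor u v → u ∈ s₂ → T₂.Ancestor u v := by
      intro v u h
      induction h with
      | single h => exact fun hu => Relation.TransGen.single (B2 _ _ h hu)
      | @tail c d h₁ h₂ ih =>
        intro hu
        have hb := B2 c d h₂ hu
        exact Relation.TransGen.tail (ih (h1₂ c d hb).1) hb
    have Bmem₂ : ∀ {v u : V}, T₂.Ancestor u v → v ∈ s₂ := by
      intro v u h
      induction h with
      | single h => exact (h1₂ _ _ h).1
      | tail h₁ h₂ ih => exact ih
    have Bchain_r : ∀ v, T.Ancestor r v → v ∈ C := by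
      intro v h
      cases h with
      | single h => exact hs₂C (B3 v h)
      | tail h₁ h₂ => exact hs₂C (Bmem₂ (Bchain₂ h₁ (B3 _ h₂)))
    -- subtree set identification
    have sub₁ : ∀ y ∈ s₁, T.subtreeSet y = T₁.subtreeSet y := by
      intro y hy
      ext v
      simp only [RootedForest.subtreeSet, Set.mem_setOf_eq]
      constructor
      · rintro (rfl | h)
        · exact Or.inl rfl
        · exact Or.inr (Bchain₁ h hy)
      · rintro (rfl | h)
        · exact Or.inl rfl
        · exact Or.inr (L1 h)
    have sub₂ : ∀ y ∈ s₂, T.subtreeSet y = T₂.subtreeSet y := by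
      intro y hy
      ext v
      simp only [RootedForest.subtreeSet, Set.mem_setOf_eq]
      constructor
      · rintro (rfl | h)
        · exact Or.inl rfl
        · exact Or.inr (Bchain₂ h hy)
      · rintro (rfl | h)
        · exact Or.inl rfl
        · exact Or.inr (L2 h)
    have subr : T.subtreeSet r = (↑C : Set V) := by
      ext v
      simp only [RootedForest.subtreeSet, Set.mem_setOf_eq, Finset.mem_coe]
      constructor
      · rintro (rfl | h)
        · exact hrC
        · exact Bchain_r v h
      · intro hvC
        by_cases hvr : v = r
        · exact Or.inl hvr
        · exact Or.inr (L3 v (Finset.mem_erase.mpr ⟨hvr, hvC⟩))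
    -- connectivity of C
    have hxC' : x ∈ (↑C : Set V) := hxC
    have key : ∀ v, Relation.ReflTransGen Rel x v → ∀ hv : v ∈ (↑C : Set V),
        (G.induce (↑C : Set V)).Reachable ⟨x, hxC'⟩ ⟨v, hv⟩ := by
      intro v h
      induction h with
      | refl => intro hv; exact SimpleGraph.Reachable.refl _
      | @tail b c hxb hbc ih =>
        intro hv
        obtain ⟨hbs, hcs, hadj⟩ := hbc
        have hbC : b ∈ (↑C : Set V) := Finset.mem_coe.mpr (Finset.mem_filter.mpr ⟨hbs, hxb⟩)
        refine (ih hbC).trans (SimpleGraph.Adj.reachable ?_)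
        show (G.induce (↑C : Set V)).Adj ⟨b, hbC⟩ ⟨c, hv⟩
        exact hadj
    have hCconn : (G.induce (↑C : Set V)).Connected := by
      rw [SimpleGraph.connected_iff]
      refine ⟨?_, ⟨⟨x, hxC'⟩⟩⟩
      intro a b
      have ha : Relation.ReflTransGen Rel x a.1 := (Finset.mem_filter.mp a.2).2
      have hb : Relation.ReflTransGen Rel x b.1 := (Finset.mem_filter.mp b.2).2
      exact (key a.1 ha a.2).symm.trans (key b.1 hb b.2)
    -- classification of s
    have hclass : ∀ w ∈ s, w = r ∨ w ∈ s₂ ∨ w ∈ s₁ := by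
      intro w hw
      by_cases hwC : w ∈ C
      · by_cases hwr : w = r
        · exact Or.inl hwr
        · exact Or.inr (Or.inl (Finset.mem_erase.mpr ⟨hwr, hwC⟩))
      · exact Or.inr (Or.inr (Finset.mem_sdiff.mpr ⟨hw, hwC⟩))
    refine ⟨T, ?_, ?_, ?_, ?_⟩
    · -- h1
      intro v u h
      rw [hTp] at h
      by_cases h2 : v ∈ s₂
      · refine ⟨hs₂s h2, ?_⟩
        rw [hTpar₂ v h2] at h
        have hbv : (T₂.parent v).getD r = u := Option.some.inj h
        cases hp : T₂.parent v with
        | none => rw [hp] at hbv; simp at hbv; exact hbv ▸ hrs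
        | some w =>
          rw [hp] at hbv; simp at hbv
          exact hs₂s (hbv ▸ (h1₂ v w hp).2)
      · by_cases hvr : v = r
        · subst hvr; rw [hTparr] at h; simp at h
        · rw [hTpar₁ v h2 hvr] at h
          exact ⟨hs₁s (h1₁ v u h).1, hs₁s (h1₁ v u h).2⟩
    · -- h2 : decomposition
      intro u v hu hv hadj
      rcases hclass u hu with rfl | hu2 | hu1
      · rcases hclass v hv with rfl | hv2 | hv1
        · exact absurd rfl hadj.ne
        · exact Or.inl (L3 v hv2)
        · exact absurd (Finset.mem_sdiff.mp hv1).2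
            (not_not.mpr (hclose u v hrC (hs₁s hv1) hadj))
      · rcases hclass v hv with rfl | hv2 | hv1
        · exact Or.inr (L3 u hu2)
        · exact (h2₂ u v hu2 hv2 hadj).imp L2 L2
        · exact absurd (Finset.mem_sdiff.mp hv1).2
            (not_not.mpr (hclose u v (hs₂C hu2) (hs₁s hv1) hadj))
      · rcases hclass v hv with rfl | hv2 | hv1
        · exact absurd (Finset.mem_sdiff.mp hu1).2
            (not_not.mpr (hclose v u hrC (hs₁s hu1) hadj.symm))
        · exact absurd (Finset.mem_sdiff.mp hu1).2
            (not_not.mpr (hclose v u (hs₂C hv2) (hs₁s hu1) hadj.symm))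
        · exact (h2₁ u v hu1 hv1 hadj).imp L1 L1
    · -- h3 : niceness
      intro y hy
      rcases hclass y hy with rfl | hy2 | hy1
      · rw [subr]; exact hCconn
      · rw [sub₂ y hy2]; exact h3₂ y hy2
      · rw [sub₁ y hy1]; exact h3₁ y hy1
    · -- h4 : depth bound
      intro v hv
      rcases hclass v hv with rfl | hv2 | hv1
      · rw [hTd, hTdepr]; omega
      · rw [hTd, hTdep₂ v hv2]
        have hb := h4₂ v hv2
        have hsub : insert r (s₂.filter (fun a => F.Ancestor a v))
            ⊆ s.filter (fun a => F.Ancestor a v) := by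
          refine Finset.insert_subset (Finset.mem_filter.mpr ⟨hrs, hs₂anc v hv2⟩) ?_
          exact Finset.filter_subset_filter _ hs₂s
        have hnot : r ∉ s₂.filter (fun a => F.Ancestor a v) :=
          fun h => hrns₂ (Finset.mem_filter.mp h).1
        have hcard := Finset.card_le_card hsub
        rw [Finset.card_insert_of_notMem hnot] at hcard
        omega
      · rw [hTd, hTdep₁ v (hdisj v hv1) (fun e => hrns₁ (e ▸ hv1))]
        have hb := h4₁ v hv1
        have hcard := Finset.card_le_card
          (Finset.filter_subset_filter (fun a => F.Ancestor a v) hs₁s)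
        omega

lemma exists_decomp [Fintype V] (G : SimpleGraph V) :
    ∃ F : RootedForest V, F.IsTreedepthDecomp G := by
  classical
  obtain ⟨n, e⟩ : ∃ n, Nonempty (V ≃ Fin n) := ⟨Fintype.card V, ⟨Fintype.equivFin V⟩⟩
  obtain ⟨e⟩ := e
  set p : V → Option V := fun v =>
    if h : (e v : ℕ) + 1 < n then some (e.symm ⟨(e v : ℕ) + 1, h⟩) else none with hpdef
  have hclaim : ∀ (k : ℕ) (u v : V), (e v : ℕ) = (e u : ℕ) + k + 1 →
      Relation.TransGen (fun a b : V => p a = some b) u v := by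
    intro k
    induction k with
    | zero =>
      intro u v h
      refine Relation.TransGen.single ?_
      have hlt : (e u : ℕ) + 1 < n := by have := (e v).isLt; omega
      show p u = some v
      rw [hpdef]
      simp only
      rw [dif_pos hlt]
      congr 1
      rw [Equiv.symm_apply_eq]
      exact Fin.ext h.symm
    | succ k ihk =>
      intro u v h
      have hlt : (e u : ℕ) + 1 < n := by have := (e v).isLt; omega
      set w : V := e.symm ⟨(e u : ℕ) + 1, hlt⟩ with hwdef
      have hw : (e w : ℕ) = (e u : ℕ) + 1 := by rw [hwdef, Equiv.apply_symm_apply]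
      refine Relation.TransGen.head ?_ (ihk w v (by omega))
      show p u = some w
      rw [hpdef]
      simp only
      rw [dif_pos hlt]
  refine ⟨⟨p, fun v => n - (e v : ℕ), ?_, ?_⟩, ?_⟩
  · intro v hv
    rw [hpdef] at hv
    simp only at hv
    by_cases h : (e v : ℕ) + 1 < n
    · rw [dif_pos h] at hv; simp at hv
    · have := (e v).isLt
      show n - (e v : ℕ) = 1
      omega
  · intro v u hv
    rw [hpdef] at hv
    simp only at hv
    by_cases h : (e v : ℕ) + 1 < n
    · rw [dif_pos h] at hv
      have hu : u = e.symm ⟨(e v : ℕ) + 1, h⟩ := (Option.some.inj hv).symm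
      have heu : (e u : ℕ) = (e v : ℕ) + 1 := by rw [hu, Equiv.apply_symm_apply]
      have := (e v).isLt
      show n - (e v : ℕ) = n - (e u : ℕ) + 1
      omega
    · rw [dif_neg h] at hv; simp at hv
  · intro u v hadj
    have hne : (e u : ℕ) ≠ (e v : ℕ) := fun h =>
      hadj.ne (e.injective (Fin.ext h))
    rcases Nat.lt_or_ge (e u : ℕ) (e v : ℕ) with h | h
    · exact Or.inr (hclaim ((e v : ℕ) - (e u : ℕ) - 1) u v (by omega))
    · exact Or.inl (hclaim ((e u : ℕ) - (e v : ℕ) - 1) v u (by omega))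

/-- Every graph `G` admits a nice treedepth decomposition of height exactly `td(G)`:
a treedepth decomposition `T` (on the vertex set of `G`) such that for every node `x`,
the subgraph of `G` induced by the subtree of `T` rooted at `x` is connected. -/
theorem stmt5 {V : Type} [Fintype V] [DecidableEq V] (G : SimpleGraph V) :
    ∃ T : RootedForest V, T.IsTreedepthDecomp G ∧
      (∀ x : V, (G.induce (T.subtreeSet x)).Connected) ∧
      T.height = G.treedepth := by
  have hS : Set.Nonempty {h | ∃ F : RootedForest V, F.IsTreedepthDecomp G ∧ F.height = h} := by
    obtain ⟨F, hF⟩ := exists_decomp G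
    exact ⟨F.height, F, hF, rfl⟩
  obtain ⟨F, hFdec, hFh⟩ := Nat.sInf_mem hS
  obtain ⟨T, h1, h2, h3, h4⟩ := nice_aux G (Finset.univ.card) Finset.univ le_rfl F
    (fun u v _ _ h => hFdec h)
  have hTdec : T.IsTreedepthDecomp G := fun u v h =>
    h2 u v (Finset.mem_univ u) (Finset.mem_univ v) h
  refine ⟨T, hTdec, fun x => h3 x (Finset.mem_univ x), ?_⟩
  have hdep : ∀ v, T.depth v ≤ F.depth v := by
    intro v
    have h := h4 v (Finset.mem_univ v)
    have hcard := card_anc_le F v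
    have h1d := td_one_le_depth F v
    omega
  have hle : T.height ≤ F.height := by
    apply csSup_le'
    rintro b ⟨v, rfl⟩
    calc T.depth v ≤ F.depth v := hdep v
    _ ≤ F.height := le_csSup (Set.Finite.bddAbove (Set.finite_range _)) ⟨v, rfl⟩
  have hge : G.treedepth ≤ T.height := Nat.sInf_le ⟨T, hTdec, rfl⟩
  have heq : G.treedepth
      = sInf {h | ∃ F : RootedForest V, F.IsTreedepthDecomp G ∧ F.height = h} := rfl
  omega
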